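/- The function L(p) = (1/((1 − 2pq)√(pq))) · (c₁/p + c₂ + c₃ · (1 − 2p)(1 + 2pq)/(1 − 2pq)), where q = 1 − p, c₁ = 0.516, c₂ = 0.121, c₃ = 0.271, is strictly decreasing on the interval (0, 0.5]. -/

import Mathlib

/-- `L(p) = (1/((1−2pq)√(pq))) (c₁/p + c₂ + c₃ (1−2p)(1+2pq)/(1−2pq))` with
`q = 1 − p`, `c₁ = 0.516`, `c₂ = 0.121`, `c₃ = 0.271`. -/
noncomputable def L (p : ℝ) : ℝ :=
  (1 / ((1 - 2 * p * (1 - p)) * Real.sqrt (p * (1 - p)))) *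
    (0.516 / p + 0.121 +
      0.271 * ((1 - 2 * p) * (1 + 2 * p * (1 - p)) / (1 - 2 * p * (1 - p))))

noncomputable def Gnum (p : ℝ) : ℝ :=
  p * (387/250*(1-2*p)^9 + 371/50*(2*p)*(1-2*p)^8 + 31989/2000*(2*p)^2*(1-2*p)^7
    + 42211/2000*(2*p)^3*(1-2*p)^6 + 80407/4000*(2*p)^4*(1-2*p)^5
    + 12021/800*(2*p)^5*(1-2*p)^4 + 70481/8000*(2*p)^6*(1-2*p)^3
    + 29863/8000*(2*p)^7*(1-2*p)^2 + 15671/16000*(2*p)^8*(1-2*p)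
    + 369/3200*(2*p)^9)

lemma L_hasDeriv {p : ℝ} (h0 : 0 < p) (h1 : p < 1/2) :
    HasDerivAt L (-(Gnum p) /
      (2 * (p*(1-p)) * (p * (1 - 2*(p*(1-p)))^2)^2 * Real.sqrt (p*(1-p)))) p := by
  have hq : 0 < 1 - p := by linarith
  have hs0 : 0 < p*(1-p) := mul_pos h0 hq
  have hr0 : 0 < Real.sqrt (p*(1-p)) := Real.sqrt_pos.2 hs0
  have hr2 : Real.sqrt (p*(1-p)) ^ 2 = p*(1-p) := Real.sq_sqrt hs0.le
  have hd0 : 0 < 1 - 2*(p*(1-p)) := by nlinarith [sq_nonneg (2*p-1)]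
  have hA : HasDerivAt (fun x : ℝ => x*(1-x)) (1*(1-p)+p*(0-1)) p :=
    (hasDerivAt_id p).mul ((hasDerivAt_const p 1).sub (hasDerivAt_id p))
  have hR : HasDerivAt (fun x : ℝ => Real.sqrt (x*(1-x)))
      (1/(2*Real.sqrt (p*(1-p))) * (1*(1-p)+p*(0-1))) p :=
    (Real.hasDerivAt_sqrt hs0.ne').comp p hA
  have hw : HasDerivAt (fun x : ℝ => 1 - 2*(x*(1-x))) (0 - 2*(1*(1-p)+p*(0-1))) p :=
    (hasDerivAt_const p 1).sub (hA.const_mul 2)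
  have hden : HasDerivAt (fun x : ℝ => (1 - 2*(x*(1-x))) * Real.sqrt (x*(1-x))) _ p :=
    hw.mul hR
  have hdenne : (1 - 2*(p*(1-p))) * Real.sqrt (p*(1-p)) ≠ 0 := (mul_pos hd0 hr0).ne'
  have hinv : HasDerivAt (fun x : ℝ => 1 / ((1 - 2*(x*(1-x))) * Real.sqrt (x*(1-x)))) _ p :=
    (hasDerivAt_const p 1).div hden hdenne
  have h1' : HasDerivAt (fun x : ℝ => 0.516/x) _ p :=
    (hasDerivAt_const p (0.516:ℝ)).div (hasDerivAt_id p) h0.ne'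
  have hu : HasDerivAt (fun x : ℝ => 1 - 2*x) (0 - 2*1) p :=
    (hasDerivAt_const p 1).sub ((hasDerivAt_id p).const_mul 2)
  have hv : HasDerivAt (fun x : ℝ => 1 + 2*(x*(1-x))) (0 + 2*(1*(1-p)+p*(0-1))) p :=
    (hasDerivAt_const p 1).add (hA.const_mul 2)
  have h3 : HasDerivAt
      (fun x : ℝ => (1-2*x) * (1 + 2*(x*(1-x))) / (1 - 2*(x*(1-x)))) _ p :=
    (hu.mul hv).div hw hd0.ne'
  have hM : HasDerivAt (fun x : ℝ => 0.516/x + 0.121 +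
      0.271 * ((1-2*x) * (1 + 2*(x*(1-x))) / (1 - 2*(x*(1-x))))) _ p :=
    (h1'.add_const 0.121).add (h3.const_mul 0.271)
  have hL := hinv.mul hM
  have hLeq : L = fun x : ℝ => (1 / ((1 - 2*(x*(1-x))) * Real.sqrt (x*(1-x)))) *
      (0.516/x + 0.121 + 0.271 * ((1-2*x) * (1 + 2*(x*(1-x))) / (1 - 2*(x*(1-x))))) := by
    funext x; simp only [L]; ring
  rw [hLeq]
  refine hL.congr_deriv ?_
  have e1 : Real.sqrt p ^ 2 = p := Real.sq_sqrt h0.le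
  have e2 : Real.sqrt (1-p) ^ 2 = 1-p := Real.sq_sqrt hq.le
  have e3 : Real.sqrt p ^ 4 = p^2 := by rw [show (4:ℕ) = 2*2 from rfl, pow_mul, e1]
  have e4 : Real.sqrt (1-p) ^ 4 = (1-p)^2 := by rw [show (4:ℕ) = 2*2 from rfl, pow_mul, e2]
  have e5 : Real.sqrt p ^ 6 = p^3 := by rw [show (6:ℕ) = 2*3 from rfl, pow_mul, e1]
  have e6 : Real.sqrt (1-p) ^ 6 = (1-p)^3 := by rw [show (6:ℕ) = 2*3 from rfl, pow_mul, e2]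
  unfold Gnum
  simp only [Pi.mul_apply]
  have hd1 : (1 - 2*(p*(1-p))) ≠ 0 := hd0.ne'
  have hd2 : (1 - 2*p*(1-p)) ≠ 0 := by nlinarith [sq_nonneg (2*p-1)]
  have hr1 : Real.sqrt (p*(1-p)) ≠ 0 := hr0.ne'
  field_simp
  simp only [hr2]
  ring

lemma Gnum_pos {p : ℝ} (h0 : 0 < p) (h1 : p < 1/2) : 0 < Gnum p := by
  have ha : (0:ℝ) < 2*p := by linarith
  have hb : (0:ℝ) < 1-2*p := by linarith
  have h9 := pow_pos hb 9
  have h18 := mul_pos (pow_pos ha 1) (pow_pos hb 8)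
  have h27 := mul_pos (pow_pos ha 2) (pow_pos hb 7)
  have h36 := mul_pos (pow_pos ha 3) (pow_pos hb 6)
  have h45 := mul_pos (pow_pos ha 4) (pow_pos hb 5)
  have h54 := mul_pos (pow_pos ha 5) (pow_pos hb 4)
  have h63 := mul_pos (pow_pos ha 6) (pow_pos hb 3)
  have h72 := mul_pos (pow_pos ha 7) (pow_pos hb 2)
  have h81 := mul_pos (pow_pos ha 8) (pow_pos hb 1)
  have h90 := pow_pos ha 9
  unfold Gnum
  apply mul_pos h0
  nlinarith [h9, h18, h27, h36, h45, h54, h63, h72, h81, h90]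

/-- The function `L(p)` is strictly decreasing on the interval `(0, 0.5]`. -/
theorem L_strictAntiOn : StrictAntiOn L (Set.Ioc (0 : ℝ) 0.5) := by
  apply strictAntiOn_of_deriv_neg (convex_Ioc (0:ℝ) 0.5)
  · intro x hx
    obtain ⟨hx0, hx5⟩ := hx
    have hx5' : x ≤ 1/2 := by norm_num at hx5 ⊢; linarith
    have hq : 0 < 1 - x := by linarith
    have hs0 : 0 < x*(1-x) := mul_pos hx0 hq
    have hr0 : 0 < Real.sqrt (x*(1-x)) := Real.sqrt_pos.2 hs0
    have hd0 : 0 < 1 - 2*x*(1-x) := by nlinarith [sq_nonneg (2*x-1)]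
    apply ContinuousAt.continuousWithinAt
    have hLdef : L = fun p : ℝ => (1 / ((1 - 2 * p * (1 - p)) * Real.sqrt (p * (1 - p)))) *
        (0.516 / p + 0.121 +
          0.271 * ((1 - 2 * p) * (1 + 2 * p * (1 - p)) / (1 - 2 * p * (1 - p)))) := rfl
    rw [hLdef]
    have hc1 : ContinuousAt (fun p : ℝ => (1 - 2 * p * (1 - p)) * Real.sqrt (p * (1 - p))) x := by
      apply ContinuousAt.mul
      · fun_prop
      · exact (Real.continuous_sqrt.comp (by fun_prop)).continuousAt
    have hd0' : 0 < 1 - 2*x*(1-x) := hd0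
    refine ContinuousAt.mul (ContinuousAt.div continuousAt_const hc1 (mul_pos hd0 hr0).ne') ?_
    refine ContinuousAt.add (ContinuousAt.add ?_ continuousAt_const) ?_
    · exact ContinuousAt.div continuousAt_const continuousAt_id hx0.ne'
    · refine ContinuousAt.mul continuousAt_const (ContinuousAt.div (by fun_prop) (by fun_prop) ?_)
      exact hd0.ne'
  · intro x hx
    rw [interior_Ioc] at hx
    obtain ⟨hx0, hx5⟩ := hx
    have hx5' : x < 1/2 := by norm_num at hx5; linarith
    have hq : 0 < 1 - x := by linarith
    have hs0 : 0 < x*(1-x) := mul_pos hx0 hq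
    have hr0 : 0 < Real.sqrt (x*(1-x)) := Real.sqrt_pos.2 hs0
    have hd0 : 0 < 1 - 2*(x*(1-x)) := by nlinarith [sq_nonneg (2*x-1)]
    rw [(L_hasDeriv hx0 hx5').deriv]
    apply div_neg_of_neg_of_pos
    · linarith [Gnum_pos hx0 hx5']
    · have h1 : 0 < x * (1 - 2*(x*(1-x)))^2 := mul_pos hx0 (pow_pos hd0 2)
      have h2 : 0 < (x * (1 - 2*(x*(1-x)))^2)^2 := pow_pos h1 2
      have := mul_pos (mul_pos (mul_pos (by norm_num : (0:ℝ) < 2) hs0) h2) hr0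
      linarith [this]
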